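/- Let μ ≥ 0 and let f : V → ℝ be continuously differentiable and μ-convex with global minimizer x*. Let β : [0,∞) → ℝ be continuous and nonnegative, and let x, v : [0,∞) → V and γ : [0,∞) → ℝ be continuously differentiable with γ(t) > 0, satisfying for all t ≥ 0: x'(t) = v(t) - x(t) - β(t)∇f(x(t)), γ(t)·v'(t) = μ(x(t) - v(t)) - ∇f(x(t)), γ'(t) = μ - γ(t). Then for every t ≥ 0, writing L(t) = f(x(t)) - f(x*) + (γ(t)/2)‖v(t) - x*‖², one has L(t) + ∫₀ᵗ e^{s - t} β(s)‖∇f(x(s))‖² ds ≤ e^{-t} L(0). -/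

import Mathlib

open scoped RealInnerProductSpace

/-- Minimizing property of the continuous H-NAG flow: along a solution of the
H-NAG system, `L(t) + ∫₀ᵗ e^{s-t} β(s) ‖∇f(x(s))‖² ds ≤ e^{-t} L(0)`. -/
theorem hnag_flow_exponential_decay
    {V : Type*} [NormedAddCommGroup V] [InnerProductSpace ℝ V] [CompleteSpace V]
    (μ : ℝ) (hμ : 0 ≤ μ) (f : V → ℝ) (f' : V → V)
    (hdiff : ∀ z, HasGradientAt f (f' z) z) (hf'cont : Continuous f')
    (hconv : ∀ z w : V, f z - f w - ⟪f' w, z - w⟫ ≥ μ / 2 * ‖z - w‖ ^ 2)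
    (xstar : V) (hmin : ∀ z, f xstar ≤ f z)
    (β : ℝ → ℝ) (hβcont : Continuous β) (hβ : ∀ s, 0 ≤ s → 0 ≤ β s)
    (x v : ℝ → V) (γ : ℝ → ℝ) (xd vd : ℝ → V) (γd : ℝ → ℝ)
    (hx : ∀ s, 0 ≤ s → HasDerivAt x (xd s) s) (hxd : ContinuousOn xd (Set.Ici 0))
    (hv : ∀ s, 0 ≤ s → HasDerivAt v (vd s) s) (hvd : ContinuousOn vd (Set.Ici 0))
    (hγ : ∀ s, 0 ≤ s → HasDerivAt γ (γd s) s) (hγd : ContinuousOn γd (Set.Ici 0))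
    (hγpos : ∀ s, 0 ≤ s → 0 < γ s)
    (ode1 : ∀ s, 0 ≤ s → xd s = v s - x s - β s • f' (x s))
    (ode2 : ∀ s, 0 ≤ s → γ s • vd s = μ • (x s - v s) - f' (x s))
    (ode3 : ∀ s, 0 ≤ s → γd s = μ - γ s)
    (t : ℝ) (ht : 0 ≤ t) :
    (f (x t) - f xstar + γ t / 2 * ‖v t - xstar‖ ^ 2)
        + ∫ s in (0 : ℝ)..t, Real.exp (s - t) * (β s * ‖f' (x s)‖ ^ 2)
      ≤ Real.exp (-t) * (f (x 0) - f xstar + γ 0 / 2 * ‖v 0 - xstar‖ ^ 2) := by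
  -- Lyapunov function and its derivative
  set L : ℝ → ℝ := fun s => f (x s) - f xstar + γ s / 2 * ‖v s - xstar‖ ^ 2 with hLdef
  set Ld : ℝ → ℝ := fun s =>
    ⟪f' (x s), xd s⟫ + (γd s / 2 * ‖v s - xstar‖ ^ 2 + γ s * ⟪vd s, v s - xstar⟫) with hLddef
  -- L has derivative Ld at every s ≥ 0
  have hL : ∀ s, 0 ≤ s → HasDerivAt L (Ld s) s := by
    intro s hs
    have h1 : HasDerivAt (fun s => f (x s)) ⟪f' (x s), xd s⟫ s := by
      have := ((hdiff (x s)).hasFDerivAt.comp_hasDerivAt s (hx s hs))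
      simpa [InnerProductSpace.toDual_apply_apply, Function.comp_def] using this
    have hvs : HasDerivAt (fun s => v s - xstar) (vd s) s := (hv s hs).sub_const _
    have h2 : HasDerivAt (fun s => ‖v s - xstar‖ ^ 2) (2 * ⟪vd s, v s - xstar⟫) s := by
      have := HasDerivAt.inner ℝ hvs hvs
      have heq : (fun s => ‖v s - xstar‖ ^ 2) = fun s => ⟪v s - xstar, v s - xstar⟫ := by
        funext u; rw [real_inner_self_eq_norm_sq]
      rw [heq]
      exact this.congr_deriv (by rw [real_inner_comm]; ring)
    have h3 : HasDerivAt (fun s => γ s / 2 * ‖v s - xstar‖ ^ 2)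
        (γd s / 2 * ‖v s - xstar‖ ^ 2 + γ s / 2 * (2 * ⟪vd s, v s - xstar⟫)) s :=
      ((hγ s hs).div_const 2).mul h2
    have h4 := (h1.sub_const (f xstar)).add h3
    have hval : Ld s = ⟪f' (x s), xd s⟫
        + (γd s / 2 * ‖v s - xstar‖ ^ 2 + γ s / 2 * (2 * ⟪vd s, v s - xstar⟫)) := by
      simp only [hLddef]; ring
    rw [hval]
    exact h4
  -- continuity of x and v on Ici 0
  have hxcont : ∀ s : ℝ, 0 ≤ s → ContinuousAt x s := fun s hs => (hx s hs).continuousAt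
  have hvcont : ∀ s : ℝ, 0 ≤ s → ContinuousAt v s := fun s hs => (hv s hs).continuousAt
  have hγcont : ∀ s : ℝ, 0 ≤ s → ContinuousAt γ s := fun s hs => (hγ s hs).continuousAt
  have hLcont : ∀ s : ℝ, 0 ≤ s → ContinuousAt L s := fun s hs => (hL s hs).continuousAt
  -- the key differential inequality
  have key : ∀ s, 0 ≤ s → Ld s + L s + β s * ‖f' (x s)‖ ^ 2 ≤ 0 := by
    intro s hs
    have e1 := ode1 s hs
    have e2 := ode2 s hs
    have e3 := ode3 s hs
    set a := x s - xstar with ha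
    set b := v s - xstar with hb
    set g := f' (x s) with hg
    have hxd' : xd s = b - a - β s • g := by rw [e1, ha, hb, hg]; abel
    have hinner1 : ⟪g, xd s⟫ = ⟪g, b⟫ - ⟪g, a⟫ - β s * ‖g‖ ^ 2 := by
      rw [hxd']
      rw [inner_sub_right, inner_sub_right, real_inner_smul_right, real_inner_self_eq_norm_sq]
    have hinner2 : γ s * ⟪vd s, v s - xstar⟫ = μ * ⟪a, b⟫ - μ * ‖b‖ ^ 2 - ⟪g, b⟫ := by
      have : γ s * ⟪vd s, v s - xstar⟫ = ⟪γ s • vd s, b⟫ := by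
        rw [real_inner_smul_left, hb]
      rw [this, e2]
      have hxv : x s - v s = a - b := by rw [ha, hb]; abel
      rw [hxv, inner_sub_left, real_inner_smul_left, inner_sub_left,
        real_inner_self_eq_norm_sq]
      ring
    -- convexity at (xstar, x s)
    have hc := hconv xstar (x s)
    have hca : f (x s) - f xstar - ⟪g, a⟫ ≤ -(μ / 2 * ‖a‖ ^ 2) := by
      have h1 : xstar - x s = -a := by rw [ha]; abel
      rw [h1, inner_neg_right] at hc
      have h2 : ‖(-a : V)‖ = ‖a‖ := norm_neg a
      rw [h2] at hc
      linarith
    have hib : ⟪a, b⟫ ≤ ‖a‖ * ‖b‖ := real_inner_le_norm a b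
    have hβs := hβ s hs
    have hg2 : (0:ℝ) ≤ ‖g‖ ^ 2 := sq_nonneg _
    have hLds : Ld s = (⟪g, b⟫ - ⟪g, a⟫ - β s * ‖g‖ ^ 2)
        + ((μ - γ s) / 2 * ‖b‖ ^ 2 + (μ * ⟪a, b⟫ - μ * ‖b‖ ^ 2 - ⟪g, b⟫)) := by
      simp only [hLddef]
      rw [hinner1, hinner2, e3, hb]
    have hLs : L s = f (x s) - f xstar + γ s / 2 * ‖b‖ ^ 2 := by
      simp only [hLdef, hb]
    rw [hLds, hLs]
    nlinarith [sq_nonneg (‖a‖ - ‖b‖), sq_nonneg (‖a‖ + ‖b‖), hμ]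
  -- the integrand
  set c : ℝ → ℝ := fun s => Real.exp s * (β s * ‖f' (x s)‖ ^ 2) with hcdef
  have hccont : ContinuousOn c (Set.Ici 0) := by
    apply ContinuousOn.mul Real.continuous_exp.continuousOn
    apply ContinuousOn.mul hβcont.continuousOn
    have hxco : ContinuousOn x (Set.Ici 0) := fun s hs => (hxcont s hs).continuousWithinAt
    exact ((continuous_norm.comp hf'cont).pow 2).comp_continuousOn hxco
  have hcint : ∀ s ∈ Set.Icc (0:ℝ) t, IntervalIntegrable c MeasureTheory.volume 0 s := by
    intro s hs
    exact (hccont.mono (by rw [Set.uIcc_of_le hs.1]; exact fun u hu => hu.1)).intervalIntegrable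
  -- the decreasing function
  set G : ℝ → ℝ := fun s => Real.exp s * L s + ∫ u in (0:ℝ)..s, c u with hGdef
  have hGmono : G t ≤ G 0 := by
    have hGcont : ContinuousOn G (Set.Icc 0 t) := by
      apply ContinuousOn.add
      · exact Real.continuous_exp.continuousOn.mul
          (fun s hs => (hLcont s hs.1).continuousWithinAt)
      · have h1 : Set.Icc (0:ℝ) t = Set.uIcc 0 t := (Set.uIcc_of_le ht).symm
        rw [h1]
        apply intervalIntegral.continuousOn_primitive_interval
        exact (hccont.mono (by rw [Set.uIcc_of_le ht]; exact fun u hu => hu.1)).integrableOn_compact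
          isCompact_uIcc
    have hGderiv : ∀ s ∈ interior (Set.Icc (0:ℝ) t),
        HasDerivAt G (Real.exp s * (Ld s + L s) + c s) s := by
      intro s hs
      rw [interior_Icc] at hs
      have hs0 : (0:ℝ) < s := hs.1
      have h1 : HasDerivAt (fun s => Real.exp s * L s)
          (Real.exp s * L s + Real.exp s * Ld s) s := by
        exact (Real.hasDerivAt_exp s).mul (hL s hs0.le)
      have h2 : HasDerivAt (fun s => ∫ u in (0:ℝ)..s, c u) (c s) s := by
        apply intervalIntegral.integral_hasDerivAt_right
          (hcint s ⟨hs0.le, hs.2.le⟩)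
        · exact (hccont.mono (fun u hu => le_of_lt hu)).stronglyMeasurableAtFilter
            isOpen_Ioi s hs0
        · exact ContinuousOn.continuousAt
            (hccont.mono (fun u (hu : u ∈ Set.Ioi (0:ℝ)) => Set.mem_Ici.mpr (le_of_lt hu)))
            (Ioi_mem_nhds hs0)
      have := h1.add h2
      exact this.congr_deriv (by ring)
    have hanti : AntitoneOn G (Set.Icc 0 t) := by
      apply antitoneOn_of_deriv_nonpos (convex_Icc 0 t) hGcont
      · intro s hs
        exact (hGderiv s hs).differentiableAt.differentiableWithinAt
      · intro s hs
        rw [(hGderiv s hs).deriv]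
        rw [interior_Icc] at hs
        have hk := key s hs.1.le
        have : Real.exp s * (Ld s + L s) ≤ Real.exp s * (-(β s * ‖f' (x s)‖ ^ 2)) := by
          apply mul_le_mul_of_nonneg_left (by linarith) (Real.exp_pos s).le
        simp only [hcdef]
        nlinarith [Real.exp_pos s]
    exact hanti (Set.left_mem_Icc.mpr ht) ⟨ht, le_refl t⟩ ht
  -- unfold G 0 and G t
  have hG0 : G 0 = L 0 := by
    simp [hGdef]
  have hGt : G t = Real.exp t * L t + ∫ u in (0:ℝ)..t, c u := rfl
  rw [hG0, hGt] at hGmono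
  -- multiply by exp (-t)
  have hexp : (0:ℝ) < Real.exp (-t) := Real.exp_pos _
  have hmul := mul_le_mul_of_nonneg_left hGmono hexp.le
  have hintegral : Real.exp (-t) * ∫ u in (0:ℝ)..t, c u
      = ∫ s in (0:ℝ)..t, Real.exp (s - t) * (β s * ‖f' (x s)‖ ^ 2) := by
    rw [← intervalIntegral.integral_const_mul]
    apply intervalIntegral.integral_congr
    intro u _
    simp only [hcdef]
    rw [← mul_assoc, ← Real.exp_add]
    ring_nf
  have hlhs : Real.exp (-t) * (Real.exp t * L t + ∫ u in (0:ℝ)..t, c u)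
      = L t + ∫ s in (0:ℝ)..t, Real.exp (s - t) * (β s * ‖f' (x s)‖ ^ 2) := by
    rw [mul_add, hintegral, ← mul_assoc, ← Real.exp_add]
    simp
  rw [hlhs] at hmul
  simpa [hLdef] using hmul
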